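/- Fix A, a, b, c > 0 and let f(p) = A·log(1 + a·p)/(b·p + c) for p ≥ 0. Then f has a unique critical point p₀ ∈ (0, ∞) (i.e., a unique solution of f′(p₀) = 0 on (0,∞)), f is strictly increasing on [0, p₀] and strictly decreasing on [p₀, ∞), and p₀ is the unique global maximizer of f on [0, ∞). In particular, any stationary point of the link EE is its optimal point. -/

import Mathlib

open Real Set

/-- The general link EE `f(p) = A·log(1 + a·p)/(b·p + c)` has a unique critical
point `p₀` on `(0, ∞)`, is strictly increasing on `[0, p₀]` and strictly decreasing
on `[p₀, ∞)`, and `p₀` is the unique global maximizer of `f` on `[0, ∞)`: any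
stationary point of the link EE is its optimal point. -/
theorem linkEE_unique_stationary_is_global_max
    (A a b c : ℝ) (hA : 0 < A) (ha : 0 < a) (hb : 0 < b) (hc : 0 < c)
    (f : ℝ → ℝ) (hf : ∀ p, f p = A * Real.log (1 + a * p) / (b * p + c)) :
    ∃ p0 : ℝ, 0 < p0 ∧ deriv f p0 = 0 ∧
      (∀ q, 0 < q → deriv f q = 0 → q = p0) ∧
      StrictMonoOn f (Set.Icc 0 p0) ∧ StrictAntiOn f (Set.Ici p0) ∧
      ∀ p, 0 ≤ p → p ≠ p0 → f p < f p0 := by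
  have hfe : f = fun p => A * Real.log (1 + a * p) / (b * p + c) := funext hf
  subst hfe
  set N : ℝ → ℝ := fun p => a / (1 + a * p) * (b * p + c) - b * Real.log (1 + a * p)
    with hNdef
  -- positivity of the pieces on [0, ∞)
  have h1 : ∀ p : ℝ, 0 ≤ p → 0 < 1 + a * p := fun p hp => by positivity
  have hd : ∀ p : ℝ, 0 ≤ p → 0 < b * p + c := fun p hp => by positivity
  -- elementary derivatives
  have hu : ∀ p : ℝ, HasDerivAt (fun p => 1 + a * p) a p := by
    intro p
    simpa using (((hasDerivAt_id p).const_mul a).const_add 1)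
  have hden : ∀ p : ℝ, HasDerivAt (fun p => b * p + c) b p := by
    intro p
    simpa using (((hasDerivAt_id p).const_mul b).add_const c)
  -- derivative of f
  have hfd : ∀ p : ℝ, 0 ≤ p →
      HasDerivAt (fun p => A * Real.log (1 + a * p) / (b * p + c))
        (A * N p / (b * p + c) ^ 2) p := by
    intro p hp
    have hlog : HasDerivAt (fun p => Real.log (1 + a * p)) (a / (1 + a * p)) p :=
      (hu p).log (h1 p hp).ne'
    have := ((hlog.const_mul A).div (hden p) (hd p hp).ne')
    refine this.congr_deriv ?_
    rw [hNdef]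
    field_simp
  -- derivative of N
  have hNd : ∀ p : ℝ, 0 ≤ p →
      HasDerivAt N (-(a ^ 2 * (b * p + c)) / (1 + a * p) ^ 2) p := by
    intro p hp
    have h1p := h1 p hp
    have hq : HasDerivAt (fun p => a / (1 + a * p))
        ((0 * (1 + a * p) - a * a) / (1 + a * p) ^ 2) p :=
      (hasDerivAt_const p a).div (hu p) h1p.ne'
    have hlog : HasDerivAt (fun p => b * Real.log (1 + a * p)) (b * (a / (1 + a * p))) p :=
      ((hu p).log h1p.ne').const_mul b
    have := (hq.mul (hden p)).sub hlog
    refine this.congr_deriv ?_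
    field_simp
    ring
  -- N is strictly decreasing on [0, ∞)
  have hNanti : StrictAntiOn N (Ici 0) := by
    apply strictAntiOn_of_deriv_neg (convex_Ici 0)
    · exact fun x hx => ((hNd x hx).continuousAt).continuousWithinAt
    · intro x hx
      rw [interior_Ici] at hx
      rw [(hNd x hx.le).deriv]
      have h2 : 0 < a ^ 2 * (b * x + c) := mul_pos (pow_pos ha 2) (hd x hx.le)
      have h3 : 0 < (1 + a * x) ^ 2 := pow_pos (h1 x hx.le) 2
      exact div_neg_of_neg_of_pos (neg_neg_of_pos h2) h3
  have hN0 : N 0 = a * c := by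
    rw [hNdef]; simp
  -- a point where N is negative
  set p1 : ℝ := max 1 (Real.exp (2 + c / b) / a) with hp1def
  have hp11 : (1:ℝ) ≤ p1 := le_max_left _ _
  have hp1pos : (0:ℝ) < p1 := lt_of_lt_of_le one_pos hp11
  have hexp : Real.exp (2 + c / b) ≤ a * p1 := by
    have : Real.exp (2 + c / b) / a ≤ p1 := le_max_right _ _
    calc Real.exp (2 + c / b) = a * (Real.exp (2 + c / b) / a) := by field_simp
    _ ≤ a * p1 := by exact mul_le_mul_of_nonneg_left this ha.le
  have hNp1 : N p1 < 0 := by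
    have hlogge : 2 + c / b ≤ Real.log (1 + a * p1) := by
      rw [← Real.log_exp (2 + c / b)]
      apply Real.log_le_log (Real.exp_pos _)
      linarith [hexp]
    have hterm2 : 2 * b + c ≤ b * Real.log (1 + a * p1) := by
      have := mul_le_mul_of_nonneg_left hlogge hb.le
      have hcb : b * (c / b) = c := by field_simp
      nlinarith
    have hterm1 : a / (1 + a * p1) * (b * p1 + c) ≤ b + c := by
      have hap : 0 < a * p1 := by positivity
      have h1' : (0:ℝ) < 1 + a * p1 := by linarith
      have ha1 : a / (1 + a * p1) ≤ a / (a * p1) := by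
        apply div_le_div_of_nonneg_left ha.le hap
        linarith
      have ha2 : a / (a * p1) = 1 / p1 := by
        field_simp
      have hstep : a / (1 + a * p1) * (b * p1 + c) ≤ 1 / p1 * (b * p1 + c) := by
        apply mul_le_mul_of_nonneg_right _ (by positivity)
        rw [← ha2]; exact ha1
      have hfin : 1 / p1 * (b * p1 + c) ≤ b + c := by
        rw [div_mul_eq_mul_div, one_mul, div_le_iff₀ hp1pos]
        nlinarith
      linarith
    rw [hNdef]
    simp only
    linarith
  have hN0pos : 0 < N 0 := by rw [hN0]; positivity
  -- IVT gives the critical point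
  have hNcont : ContinuousOn N (Icc 0 p1) :=
    fun x hx => ((hNd x hx.1).continuousAt).continuousWithinAt
  have hIVT := intermediate_value_Icc' hp1pos.le hNcont
  have h0mem : (0:ℝ) ∈ Icc (N p1) (N 0) := ⟨hNp1.le, hN0pos.le⟩
  obtain ⟨p0, hp0mem, hNp0⟩ := hIVT h0mem
  have hp0nonneg : 0 ≤ p0 := hp0mem.1
  have hp0pos : 0 < p0 := by
    rcases hp0nonneg.lt_or_eq with h | h
    · exact h
    · exfalso; rw [← h] at hNp0; exact hN0pos.ne' hNp0
  -- sign of N on either side of p0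
  have hNpos : ∀ x, 0 ≤ x → x < p0 → 0 < N x := by
    intro x hx hlt
    have := hNanti hx (hx.trans hlt.le) hlt
    rw [hNp0] at this; exact this
  have hNneg : ∀ x, p0 < x → N x < 0 := by
    intro x hlt
    have := hNanti hp0nonneg (hp0nonneg.trans hlt.le) hlt
    rw [hNp0] at this; exact this
  have hMono : StrictMonoOn (fun p => A * Real.log (1 + a * p) / (b * p + c)) (Icc 0 p0) := by
    apply strictMonoOn_of_deriv_pos (convex_Icc 0 p0)
    · exact fun x hx => ((hfd x hx.1).continuousAt).continuousWithinAt
    · intro x hx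
      rw [interior_Icc] at hx
      rw [(hfd x hx.1.le).deriv]
      have := hNpos x hx.1.le hx.2
      have h2 := hd x hx.1.le
      positivity
  have hAnti : StrictAntiOn (fun p => A * Real.log (1 + a * p) / (b * p + c)) (Ici p0) := by
    apply strictAntiOn_of_deriv_neg (convex_Ici p0)
    · exact fun x hx => ((hfd x (hp0nonneg.trans hx)).continuousAt).continuousWithinAt
    · intro x hx
      rw [interior_Ici] at hx
      rw [(hfd x (hp0nonneg.trans hx.le)).deriv]
      have hNx := hNneg x hx
      have h2 := hd x (hp0nonneg.trans hx.le)
      exact div_neg_of_neg_of_pos (mul_neg_of_pos_of_neg hA hNx) (by positivity)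
  refine ⟨p0, hp0pos, ?_, ?_, hMono, hAnti, ?_⟩
  · rw [(hfd p0 hp0nonneg).deriv, hNp0]
    simp
  · intro q hq hdq
    rw [(hfd q hq.le).deriv] at hdq
    have hdq' : A * N q = 0 := by
      have := (hd q hq.le)
      field_simp at hdq
      simpa using hdq
    have hNq : N q = 0 := by
      rcases mul_eq_zero.1 hdq' with h | h
      · exact absurd h hA.ne'
      · exact h
    exact hNanti.injOn hq.le hp0nonneg (hNq.trans hNp0.symm)
  · intro p hp hne
    rcases hne.lt_or_gt with hlt | hlt
    · exact hMono ⟨hp, hlt.le⟩ ⟨hp0nonneg, le_rfl⟩ hlt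
    · exact hAnti (Set.mem_Ici.mpr le_rfl) hlt.le hlt
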